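/- For any n ≥ 0 and any a ∈ F, there exists a nonzero operator P = Σ_{0≤i≤n} p_i·d_x^i ∈ F[d_x, d_y] of order n in d_x (with p_n ≠ 0) such that P·(d_y + a) = (d_y + a)·P. -/

import Mathlib

open scoped BigOperators

/-- The ring of linear partial differential operators `F[d_x, d_y]` over a differential
field `F` with two commuting derivations `dx`, `dy`.  `D` is the (noncommutative) operator
ring, `ι : F →+* D` the inclusion of coefficients, `X`, `Y` the operators `d_x`, `d_y`,
subject to `X * f = f * X + dx f`, `Y * f = f * Y + dy f`, `X * Y = Y * X`.
`coeff` records the (unique) coefficients of an operator in the normal form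
`P = ∑ coeff P (i,j) • X^i * Y^j`. -/
structure DiffOp (F : Type*) [Field F] (D : Type*) [Ring D] where
  dx : F → F
  dy : F → F
  dx_add : ∀ a b : F, dx (a + b) = dx a + dx b
  dx_mul : ∀ a b : F, dx (a * b) = dx a * b + a * dx b
  dy_add : ∀ a b : F, dy (a + b) = dy a + dy b
  dy_mul : ∀ a b : F, dy (a * b) = dy a * b + a * dy b
  dx_dy_comm : ∀ a : F, dx (dy a) = dy (dx a)
  ι : F →+* D
  X : D
  Y : D
  X_Y_comm : X * Y = Y * X
  X_mul_ι : ∀ f : F, X * ι f = ι f * X + ι (dx f)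
  Y_mul_ι : ∀ f : F, Y * ι f = ι f * Y + ι (dy f)
  coeff : D → (ℕ × ℕ) →₀ F
  repr : ∀ P : D, P = (coeff P).sum fun ij a => ι a * X ^ ij.1 * Y ^ ij.2
  coeff_add : ∀ P Q : D, coeff (P + Q) = coeff P + coeff Q
  coeff_smul : ∀ (a : F) (P : D), coeff (ι a * P) = a • coeff P

namespace DiffOp

variable {F : Type*} [Field F] {D : Type*} [Ring D]

/-- The order of a differential operator: `max { i + j : p_{ij} ≠ 0 }`. -/
noncomputable def ord (S : DiffOp F D) (P : D) : ℕ :=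
  (S.coeff P).support.sup fun ij => ij.1 + ij.2

/-- The symbol of a differential operator: the top-order homogeneous part,
as a (commutative) polynomial in the two variables `v = X 0`, `w = X 1`. -/
noncomputable def symb (S : DiffOp F D) (P : D) : MvPolynomial (Fin 2) F :=
  ∑ ij ∈ (S.coeff P).support.filter (fun ij => ij.1 + ij.2 = S.ord P),
    MvPolynomial.monomial (Finsupp.single 0 ij.1 + Finsupp.single 1 ij.2) (S.coeff P ij)

/-- The subring `F[d_y] ⊆ F[d_x, d_y]`. -/
def Fdy (S : DiffOp F D) : Subring D := Subring.closure (Set.range S.ι ∪ {S.Y})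

/-- The Hilbert–Kolchin dimension count of a left ideal `I` in filtration degree `z`:
`dim_F {operators of order ≤ z} − dim_F (I ∩ {order ≤ z})`, computed via coefficients. -/
noncomputable def hkDim (S : DiffOp F D) (I : Submodule D D) (z : ℕ) : ℤ :=
  (Module.finrank F ↥(Finsupp.supported F F {ij : ℕ × ℕ | ij.1 + ij.2 ≤ z}) : ℤ) -
    (Module.finrank F ↥(Submodule.span F
      (S.coeff '' {P : D | P ∈ I ∧ ∀ ij ∈ (S.coeff P).support, ij.1 + ij.2 ≤ z})) : ℤ)

end DiffOp


section Aux5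

variable {F : Type*} [Field F] {D : Type*} [Ring D]

lemma DiffOp.dx_zero' (S : DiffOp F D) : S.dx 0 = 0 := by
  have h := S.dx_add 0 0
  rw [add_zero] at h
  exact (left_eq_add.mp h)

lemma DiffOp.pow_X_comm_Y (S : DiffOp F D) (n : ℕ) : S.X ^ n * S.Y = S.Y * S.X ^ n := by
  induction n with
  | zero => simp
  | succ n ih =>
    rw [pow_succ, mul_assoc, S.X_Y_comm, ← mul_assoc, ih, mul_assoc]

lemma DiffOp.expand_pow_X_mul (S : DiffOp F D) (n : ℕ) (f : F) :
    ∃ p : ℕ → F, p n = f ∧ (∀ j, n < j → p j = 0) ∧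
      S.X ^ n * S.ι f = ∑ i ∈ Finset.range (n + 1), S.ι (p i) * S.X ^ i := by
  induction n with
  | zero =>
    exact ⟨fun j => if j = 0 then f else 0, by simp, fun j hj => if_neg (by omega), by simp⟩
  | succ n ih =>
    obtain ⟨p, hpn, hp0, hsum⟩ := ih
    refine ⟨fun j => (if j = 0 then 0 else p (j - 1)) + S.dx (p j), ?_, ?_, ?_⟩
    · simp [hpn, hp0 (n + 1) (by omega), S.dx_zero']
    · intro j hj
      have h1 : p (j - 1) = 0 := hp0 _ (by omega)
      have h2 : p j = 0 := hp0 _ (by omega)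
      simp [h1, h2, S.dx_zero', if_neg (by omega : ¬ j = 0)]
    · have step : S.X ^ (n + 1) * S.ι f
          = ∑ i ∈ Finset.range (n + 1), S.ι (p i) * S.X ^ (i + 1)
            + ∑ i ∈ Finset.range (n + 1), S.ι (S.dx (p i)) * S.X ^ i := by
        have key : ∀ i ∈ Finset.range (n + 1),
            S.X * (S.ι (p i) * S.X ^ i)
              = S.ι (p i) * S.X ^ (i + 1) + S.ι (S.dx (p i)) * S.X ^ i := by
          intro i _
          rw [← mul_assoc, S.X_mul_ι, add_mul, mul_assoc, ← pow_succ']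
        rw [pow_succ', mul_assoc, hsum, Finset.mul_sum, Finset.sum_congr rfl key,
          Finset.sum_add_distrib]
      rw [step]
      have hsplit : ∀ j, S.ι ((if j = 0 then 0 else p (j - 1)) + S.dx (p j)) * S.X ^ j
          = S.ι (if j = 0 then 0 else p (j - 1)) * S.X ^ j + S.ι (S.dx (p j)) * S.X ^ j := by
        intro j; rw [map_add, add_mul]
      rw [Finset.sum_congr rfl fun j _ => hsplit j, Finset.sum_add_distrib]
      congr 1
      · rw [Finset.sum_range_succ' (fun j => S.ι (if j = 0 then 0 else p (j - 1)) * S.X ^ j)]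
        simp
      · rw [Finset.sum_range_succ (fun j => S.ι (S.dx (p j)) * S.X ^ j) (n + 1), hp0 (n + 1) (by omega), S.dx_zero', map_zero,
          zero_mul, add_zero]

end Aux5

/-- over a differentially closed field (here we use the consequence of
differential closedness that every `a ∈ F` is a logarithmic `d_y`-derivative `d_y(u)/u`),
for every `n` and every `a ∈ F` there is an operator `P = ∑_{i ≤ n} p_i d_x^i` with
`p_n ≠ 0` commuting with `d_y + a`. -/
theorem statement5 {F : Type*} [Field F] [CharZero F] {D : Type*} [Ring D] [Nontrivial D]
    (S : DiffOp F D)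
    (hDC : ∀ a : F, ∃ u : F, u ≠ 0 ∧ S.dy u = a * u)
    (n : ℕ) (a : F) :
    ∃ p : Fin (n + 1) → F, p (Fin.last n) ≠ 0 ∧
      (∑ i : Fin (n + 1), S.ι (p i) * S.X ^ (i : ℕ)) * (S.Y + S.ι a)
        = (S.Y + S.ι a) * ∑ i : Fin (n + 1), S.ι (p i) * S.X ^ (i : ℕ) := by
  obtain ⟨u, hu, hdu⟩ := hDC (-a)
  obtain ⟨p, hpn, hp0, hsum⟩ := S.expand_pow_X_mul n u⁻¹
  have hdy1 : S.dy 1 = 0 := by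
    have h := S.dy_mul 1 1
    rw [one_mul, mul_one, one_mul] at h
    exact (left_eq_add.mp h)
  have hdyinv : S.dy u⁻¹ = a * u⁻¹ := by
    have h := S.dy_mul u u⁻¹
    rw [mul_inv_cancel₀ hu, hdy1, hdu] at h
    have h2 : u * S.dy u⁻¹ = a := by
      linear_combination (-1 : F) * h + a * (mul_inv_cancel₀ hu)
    linear_combination u⁻¹ * h2 - S.dy u⁻¹ * (inv_mul_cancel₀ hu)
  refine ⟨fun i => u * p i, ?_, ?_⟩
  · show u * p n ≠ 0
    rw [hpn, mul_inv_cancel₀ hu]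
    exact one_ne_zero
  · have hPsum : (∑ i : Fin (n + 1), S.ι (u * p (i : ℕ)) * S.X ^ (i : ℕ))
        = S.ι u * (S.X ^ n * S.ι u⁻¹) := by
      rw [hsum, Finset.mul_sum]
      rw [Fin.sum_univ_eq_sum_range (fun i => S.ι (u * p i) * S.X ^ i)]
      refine Finset.sum_congr rfl fun i _ => ?_
      rw [map_mul, mul_assoc]
    rw [hPsum]
    have hZu : (S.Y + S.ι a) * S.ι u = S.ι u * S.Y := by
      rw [add_mul, S.Y_mul_ι, ← map_mul]
      have : S.dy u + a * u = 0 := by rw [hdu]; ring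
      rw [add_assoc, ← map_add, this, map_zero, add_zero]
    have hZuinv : S.ι u⁻¹ * (S.Y + S.ι a) = S.Y * S.ι u⁻¹ := by
      rw [S.Y_mul_ι, hdyinv, mul_add, ← map_mul, mul_comm u⁻¹ a]
    calc S.ι u * (S.X ^ n * S.ι u⁻¹) * (S.Y + S.ι a)
        = S.ι u * (S.X ^ n * (S.ι u⁻¹ * (S.Y + S.ι a))) := by
          simp only [mul_assoc]
      _ = S.ι u * (S.X ^ n * (S.Y * S.ι u⁻¹)) := by rw [hZuinv]
      _ = S.ι u * S.Y * (S.X ^ n * S.ι u⁻¹) := by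
          rw [← mul_assoc (S.X ^ n) S.Y (S.ι u⁻¹), S.pow_X_comm_Y]
          simp only [mul_assoc]
      _ = (S.Y + S.ι a) * (S.ι u * (S.X ^ n * S.ι u⁻¹)) := by
          rw [← hZu]
          simp only [mul_assoc]
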